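/- arXiv:2603.26149 — 3 statements merged into one kernel-verified Lean document; each statement's English description precedes it below -/
import Mathlib

section
/- Let B and B̃ be m×m real symmetric positive semidefinite matrices, and let K, I be subspaces of ℝ^m with I ⊆ Im(B̃) and (ker(B) ∩ ker(B̃))^⊥ ∩ ker(B̃) ⊆ K ⊆ ker(B̃). Let Π be the Euclidean orthogonal projector onto S = K ⊕ I. Then for every w ∈ ker(B̃), the vector w − Π w lies in ker(B) ∩ ker(B̃); in particular B(w − Π w) = 0. -/
open Matrix

/-- under the kernel/image assumptions on `K` and `I`, for every
`w ∈ ker(B̃)` the residual `w − Π w` of the Euclidean orthogonal projection onto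
`S = K ⊕ I` lies in `ker(B) ∩ ker(B̃)`; in particular `B (w − Π w) = 0`. -/
theorem residual_mem_ker {m : ℕ} (B Bt : Matrix (Fin m) (Fin m) ℝ)
    (hB : B.PosSemidef) (hBt : Bt.PosSemidef)
    (K I : Submodule ℝ (EuclideanSpace ℝ (Fin m)))
    (hI : I ≤ LinearMap.range (Matrix.toEuclideanLin Bt))
    (hK1 : ((LinearMap.ker (Matrix.toEuclideanLin B) ⊓
        LinearMap.ker (Matrix.toEuclideanLin Bt))ᗮ ⊓
        LinearMap.ker (Matrix.toEuclideanLin Bt)) ≤ K)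
    (hK2 : K ≤ LinearMap.ker (Matrix.toEuclideanLin Bt)) :
    ∀ w ∈ LinearMap.ker (Matrix.toEuclideanLin Bt),
      (w - (Submodule.orthogonalProjectionOnto (K ⊔ I) w : EuclideanSpace ℝ (Fin m)) ∈
          LinearMap.ker (Matrix.toEuclideanLin B) ⊓
            LinearMap.ker (Matrix.toEuclideanLin Bt)) ∧
        Matrix.toEuclideanLin B
          (w - (Submodule.orthogonalProjectionOnto (K ⊔ I) w : EuclideanSpace ℝ (Fin m))) = 0 := by
  intro w hw
  set T := Matrix.toEuclideanLin Bt with hTdef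
  have hsymm : LinearMap.IsSymmetric T := (Matrix.isHermitian_iff_isSymmetric).1 hBt.1
  set S : Submodule ℝ (EuclideanSpace ℝ (Fin m)) := K ⊔ I with hSdef
  set r : EuclideanSpace ℝ (Fin m) := w - (Submodule.orthogonalProjectionOnto S w : EuclideanSpace ℝ (Fin m))
    with hrdef
  have hrperp : r ∈ Sᗮ := S.sub_starProjection_mem_orthogonal w
  have hproj : (Submodule.orthogonalProjectionOnto S w : EuclideanSpace ℝ (Fin m)) ∈ S :=
    (Submodule.orthogonalProjectionOnto S w).2
  obtain ⟨k, hk, i, hi, hki⟩ := Submodule.mem_sup.1 hproj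
  have hkT : k ∈ LinearMap.ker T := hK2 hk
  obtain ⟨y, hy⟩ := hI hi
  have h1 : inner ℝ (w - k) i = (0 : ℝ) := by
    rw [← hy, ← hsymm (w - k) y]
    simp [map_sub, LinearMap.mem_ker.1 hw, LinearMap.mem_ker.1 hkT]
  have h2 : inner ℝ r i = (0 : ℝ) :=
    (Submodule.mem_orthogonal' S r).1 hrperp i (Submodule.mem_sup_right hi)
  have hi0 : i = 0 := by
    have hieq : i = (w - k) - r := by
      rw [hrdef, ← hki]; abel
    have : inner ℝ i i = (0 : ℝ) := by
      nth_rewrite 1 [hieq]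
      rw [inner_sub_left, h1, h2, sub_zero]
    exact inner_self_eq_zero.1 this
  have hrw : r = w - k := by rw [hrdef, ← hki, hi0]; abel
  have hrT : r ∈ LinearMap.ker T := by
    rw [LinearMap.mem_ker, hrw, map_sub, LinearMap.mem_ker.1 hw, LinearMap.mem_ker.1 hkT,
      sub_zero]
  set N : Submodule ℝ (EuclideanSpace ℝ (Fin m)) :=
    LinearMap.ker (Matrix.toEuclideanLin B) ⊓ LinearMap.ker T with hNdef
  set n : EuclideanSpace ℝ (Fin m) := (Submodule.orthogonalProjectionOnto N r : EuclideanSpace ℝ (Fin m))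
    with hndef
  have hnN : n ∈ N := (Submodule.orthogonalProjectionOnto N r).2
  have hpN : r - n ∈ Nᗮ := N.sub_starProjection_mem_orthogonal r
  have hpT : r - n ∈ LinearMap.ker T := by
    rw [LinearMap.mem_ker, map_sub, LinearMap.mem_ker.1 hrT, LinearMap.mem_ker.1 hnN.2,
      sub_zero]
  have hpK : r - n ∈ K := hK1 ⟨hpN, hpT⟩
  have h3 : inner ℝ r (r - n) = (0 : ℝ) :=
    (Submodule.mem_orthogonal' S r).1 hrperp (r - n) (Submodule.mem_sup_left hpK)
  have h4 : inner ℝ n (r - n) = (0 : ℝ) := hpN n hnN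
  have hp0 : r - n = 0 := by
    have : inner ℝ (r - n) (r - n) = (0 : ℝ) := by
      rw [inner_sub_left, h3, h4, sub_zero]
    exact inner_self_eq_zero.1 this
  have hrN : r ∈ N := by
    have : r = n := by rw [← sub_eq_zero]; exact hp0
    rw [this]; exact hnN
  exact ⟨hrN, LinearMap.mem_ker.1 hrN.1⟩
end

section
/- Let B and B̃ be m×m real symmetric positive semidefinite matrices, let K, I be subspaces of ℝ^m with I ⊆ Im(B̃) and (ker(B) ∩ ker(B̃))^⊥ ∩ ker(B̃) ⊆ K ⊆ ker(B̃), let Π be the Euclidean orthogonal projector onto S = K ⊕ I, and let τ > 0. If (v − Π v)ᵀ B (v − Π v) ≤ τ vᵀ B̃ v for every v ∈ Im(B̃), then (u − Π u)ᵀ B (u − Π u) ≤ τ uᵀ B̃ u for every u ∈ ℝ^m. -/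
open Matrix RealInnerProductSpace

/-- The quadratic form `x ↦ xᵀ M x` associated with a real matrix, written with
the Euclidean inner product. -/
noncomputable def quadForm {m : ℕ} (M : Matrix (Fin m) (Fin m) ℝ)
    (x : EuclideanSpace ℝ (Fin m)) : ℝ :=
  ⟪(Matrix.toEuclideanLin M) x, x⟫

section aux

variable {m : ℕ}

/-- For a symmetric operator on a finite-dimensional space, `(ker T)ᗮ = range T`. -/
lemma aux_ker_orthogonal_eq_range {E : Type*} [NormedAddCommGroup E]
    [InnerProductSpace ℝ E] [FiniteDimensional ℝ E] {T : E →ₗ[ℝ] E}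
    (hT : T.IsSymmetric) : (LinearMap.ker T)ᗮ = LinearMap.range T := by
  have hle : LinearMap.range T ≤ (LinearMap.ker T)ᗮ := by
    rintro _ ⟨y, rfl⟩ z hz
    have hz' : T z = 0 := hz
    rw [← hT z y, hz', inner_zero_left]
  refine (Submodule.eq_of_le_of_finrank_le hle ?_).symm
  have h1 := Submodule.finrank_add_finrank_orthogonal (LinearMap.ker T)
  have h2 := LinearMap.finrank_range_add_finrank_ker T
  omega

/-- Adding a kernel vector doesn't change the quadratic form of a symmetric matrix. -/
lemma aux_quadForm_add_ker (M : Matrix (Fin m) (Fin m) ℝ) (hM : M.IsHermitian)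
    (x q : EuclideanSpace ℝ (Fin m)) (hq : Matrix.toEuclideanLin M q = 0) :
    quadForm M (x + q) = quadForm M x := by
  have hsym : (Matrix.toEuclideanLin M).IsSymmetric :=
    Matrix.isHermitian_iff_isSymmetric.mp hM
  simp only [quadForm, map_add, hq, add_zero, inner_add_right]
  have h0 : ⟪Matrix.toEuclideanLin M x, q⟫ = (0 : ℝ) := by
    rw [hsym x q, hq, inner_zero_right]
  rw [h0, add_zero]

end aux

/-- if `(v − Π v)ᵀ B (v − Π v) ≤ τ vᵀ B̃ v` for every `v ∈ Im(B̃)`, then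
`(u − Π u)ᵀ B (u − Π u) ≤ τ uᵀ B̃ u` for every `u ∈ ℝᵐ`. -/
theorem image_estimate_implies_global_estimate {m : ℕ}
    (B Bt : Matrix (Fin m) (Fin m) ℝ)
    (hB : B.PosSemidef) (hBt : Bt.PosSemidef)
    (K I : Submodule ℝ (EuclideanSpace ℝ (Fin m)))
    (hI : I ≤ LinearMap.range (Matrix.toEuclideanLin Bt))
    (hK1 : ((LinearMap.ker (Matrix.toEuclideanLin B) ⊓
        LinearMap.ker (Matrix.toEuclideanLin Bt))ᗮ ⊓
        LinearMap.ker (Matrix.toEuclideanLin Bt)) ≤ K)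
    (hK2 : K ≤ LinearMap.ker (Matrix.toEuclideanLin Bt))
    (τ : ℝ) (hτ : 0 < τ)
    (himage : ∀ v ∈ LinearMap.range (Matrix.toEuclideanLin Bt),
      quadForm B (v - (Submodule.orthogonalProjection (K ⊔ I) v : EuclideanSpace ℝ (Fin m))) ≤
        τ * quadForm Bt v) :
    ∀ u : EuclideanSpace ℝ (Fin m),
      quadForm B (u - (Submodule.orthogonalProjection (K ⊔ I) u : EuclideanSpace ℝ (Fin m))) ≤
        τ * quadForm Bt u := by
  intro u
  set TB := Matrix.toEuclideanLin B with hTB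
  set TBt := Matrix.toEuclideanLin Bt with hTBt
  have hBtsym : TBt.IsSymmetric := Matrix.isHermitian_iff_isSymmetric.mp hBt.1
  set S := K ⊔ I with hS
  set N := LinearMap.ker TB ⊓ LinearMap.ker TBt with hN
  -- decompose u = v + w, v ∈ range TBt, w ∈ ker TBt
  set w : EuclideanSpace ℝ (Fin m) := (Submodule.orthogonalProjection (LinearMap.ker TBt) u : EuclideanSpace ℝ (Fin m)) with hw
  set v : EuclideanSpace ℝ (Fin m) := u - w with hv
  have hwker : w ∈ LinearMap.ker TBt := Submodule.coe_mem _
  have hvrange : v ∈ LinearMap.range TBt := by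
    rw [← aux_ker_orthogonal_eq_range hBtsym]
    exact Submodule.sub_starProjection_mem_orthogonal u
  -- decompose w = w₀ + w₁, w₀ ∈ N, w₁ ∈ Nᗮ ⊓ ker TBt ⊆ K
  set w₀ : EuclideanSpace ℝ (Fin m) := (Submodule.orthogonalProjection N w : EuclideanSpace ℝ (Fin m)) with hw0
  set w₁ : EuclideanSpace ℝ (Fin m) := w - w₀ with hw1
  have hw0N : w₀ ∈ N := Submodule.coe_mem _
  have hw1K : w₁ ∈ K := by
    apply hK1
    exact ⟨Submodule.sub_starProjection_mem_orthogonal w,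
      Submodule.sub_mem _ hwker hw0N.2⟩
  -- decompose w₀ = p + q, p ∈ K ⊓ N, q ⊥ S and q ∈ ker TB
  set p : EuclideanSpace ℝ (Fin m) := (Submodule.orthogonalProjection (K ⊓ N) w₀ : EuclideanSpace ℝ (Fin m)) with hp
  set q : EuclideanSpace ℝ (Fin m) := w₀ - p with hq
  have hpKN : p ∈ K ⊓ N := Submodule.coe_mem _
  have hqN : q ∈ N := Submodule.sub_mem _ hw0N hpKN.2
  have hqKN : q ∈ (K ⊓ N)ᗮ := Submodule.sub_starProjection_mem_orthogonal w₀
  have hqS : q ∈ Sᗮ := by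
    rw [hS, ← Submodule.inf_orthogonal]
    refine ⟨(Submodule.mem_orthogonal _ _).mpr ?_, (Submodule.mem_orthogonal _ _).mpr ?_⟩
    · -- q ⊥ K
      intro k hk
      set nk : EuclideanSpace ℝ (Fin m) := (Submodule.orthogonalProjection N k : EuclideanSpace ℝ (Fin m)) with hnk
      have hnkN : nk ∈ N := Submodule.coe_mem _
      have hn'K : k - nk ∈ K := hK1 ⟨Submodule.sub_starProjection_mem_orthogonal k,
        Submodule.sub_mem _ (hK2 hk) hnkN.2⟩
      have hnkK : nk ∈ K := by
        have : nk = k - (k - nk) := by abel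
        rw [this]; exact Submodule.sub_mem _ hk hn'K
      have h1 : ⟪nk, q⟫ = (0 : ℝ) :=
        (Submodule.mem_orthogonal _ _).mp hqKN nk ⟨hnkK, hnkN⟩
      have h2 : ⟪k - nk, q⟫ = (0 : ℝ) := by
        rw [real_inner_comm]
        exact (Submodule.mem_orthogonal _ _).mp
          (Submodule.sub_starProjection_mem_orthogonal (K := N) k) q hqN
      calc ⟪k, q⟫ = ⟪nk, q⟫ + ⟪k - nk, q⟫ := by
            rw [← inner_add_left]; congr 1; abel
        _ = 0 := by rw [h1, h2, add_zero]
    · -- q ⊥ I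
      intro i hi
      obtain ⟨y, rfl⟩ := hI hi
      have hqker : TBt q = 0 := hqN.2
      rw [hBtsym y q, hqker, inner_zero_right]
  -- now compute the projections
  have hPq : (Submodule.orthogonalProjection S q : EuclideanSpace ℝ (Fin m)) = 0 := by
    rw [Submodule.orthogonalProjectionOnto_apply_of_mem_orthogonal hqS,
      Submodule.coe_zero]
  have hPp : (Submodule.orthogonalProjection S p : EuclideanSpace ℝ (Fin m)) = p :=
    Submodule.starProjection_eq_self_iff.mpr (le_sup_left (b := I) hpKN.1)
  have hPw1 : (Submodule.orthogonalProjection S w₁ : EuclideanSpace ℝ (Fin m)) = w₁ :=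
    Submodule.starProjection_eq_self_iff.mpr (le_sup_left (b := I) hw1K)
  have hu : u = v + p + w₁ + q := by
    simp only [hv, hw1, hq]; abel
  have hPu : (Submodule.orthogonalProjection S u : EuclideanSpace ℝ (Fin m)) =
      (Submodule.orthogonalProjection S v : EuclideanSpace ℝ (Fin m)) + p + w₁ := by
    rw [hu]
    simp only [map_add, Submodule.coe_add, hPp, hPw1, hPq, add_zero]
  have hdiff : u - (Submodule.orthogonalProjection S u : EuclideanSpace ℝ (Fin m)) =
      (v - (Submodule.orthogonalProjection S v : EuclideanSpace ℝ (Fin m))) + q := by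
    rw [hPu, hu]; abel
  have hqkerB : TB q = 0 := hqN.1
  have hwkerBt : TBt (w₀ + w₁) = 0 := by
    have : w₀ + w₁ = w := by rw [hw1]; abel
    rw [this]; exact hwker
  have hQB : quadForm B (u - (Submodule.orthogonalProjection S u : EuclideanSpace ℝ (Fin m))) =
      quadForm B (v - (Submodule.orthogonalProjection S v : EuclideanSpace ℝ (Fin m))) := by
    rw [hdiff]; exact aux_quadForm_add_ker B hB.1 _ q hqkerB
  have hQBt : quadForm Bt u = quadForm Bt v := by
    have hu' : u = v + (w₀ + w₁) := by rw [hv, hw1]; abel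
    rw [hu']; exact aux_quadForm_add_ker Bt hBt.1 v _ hwkerBt
  rw [hQB, hQBt]
  exact himage v hvrange
end

section
/- Let Ã and S be n×n real symmetric positive semidefinite matrices such that xᵀ S x ≤ M xᵀ Ã x for all x ∈ ℝⁿ, for some constant M > 0. Let T, T̂ ∈ ℝ^{n×n^c} satisfy Tᵀ Ã T = I_{n^c} and T̂ᵀ Ã T̂ = I_{n^c}, with associated Ã-orthogonal projectors Π = T Tᵀ Ã and Π̂ = T̂ T̂ᵀ Ã. Then for every v ∈ ℝⁿ, (Π v − Π̂ v)ᵀ S (Π v − Π̂ v) ≤ 2 M (n^c − ‖T̂ᵀ Ã T‖_F²) · vᵀ Ã v, where ‖·‖_F denotes the Frobenius norm. -/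
open Matrix

/-- Squared Frobenius norm of a real matrix. -/
noncomputable def frobSq {a b : ℕ} (M : Matrix (Fin a) (Fin b) ℝ) : ℝ :=
  ∑ i, ∑ j, (M i j) ^ 2

lemma frobSq_nonneg {a b : ℕ} (M : Matrix (Fin a) (Fin b) ℝ) : 0 ≤ frobSq M :=
  Finset.sum_nonneg fun _ _ => Finset.sum_nonneg fun _ _ => sq_nonneg _

lemma frobSq_eq_trace {a b : ℕ} (M : Matrix (Fin a) (Fin b) ℝ) :
    frobSq M = Matrix.trace (M * Mᵀ) := by
  simp only [frobSq, Matrix.trace, Matrix.diag, Matrix.mul_apply, Matrix.transpose_apply, sq]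

lemma frobSq_eq_trace' {a b : ℕ} (M : Matrix (Fin a) (Fin b) ℝ) :
    frobSq M = Matrix.trace (Mᵀ * M) := by
  rw [frobSq_eq_trace, Matrix.trace_mul_comm]

lemma dot_quad {p q r : ℕ} (N : Matrix (Fin p) (Fin q) ℝ) (W : Matrix (Fin p) (Fin r) ℝ)
    (x : Fin q → ℝ) (y : Fin r → ℝ) :
    (N.mulVec x) ⬝ᵥ (W.mulVec y) = x ⬝ᵥ ((Nᵀ * W).mulVec y) := by
  rw [← Matrix.mulVec_mulVec, Matrix.dotProduct_mulVec, Matrix.dotProduct_mulVec,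
    Matrix.vecMul_transpose, Matrix.dotProduct_mulVec]

lemma mulVec_normSq_le {p q : ℕ} (B : Matrix (Fin p) (Fin q) ℝ) (x : Fin q → ℝ) :
    B.mulVec x ⬝ᵥ B.mulVec x ≤ frobSq B * (x ⬝ᵥ x) := by
  have h : ∀ i : Fin p, (B.mulVec x i) * (B.mulVec x i) ≤ (∑ j, B i j ^ 2) * (x ⬝ᵥ x) := by
    intro i
    have := Finset.sum_mul_sq_le_sq_mul_sq Finset.univ (fun j => B i j) x
    simpa [Matrix.mulVec, dotProduct, sq] using this
  calc B.mulVec x ⬝ᵥ B.mulVec x = ∑ i, (B.mulVec x i) * (B.mulVec x i) := rfl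
    _ ≤ ∑ i, (∑ j, B i j ^ 2) * (x ⬝ᵥ x) := Finset.sum_le_sum (fun i _ => h i)
    _ = frobSq B * (x ⬝ᵥ x) := by rw [frobSq, Finset.sum_mul]

/-- perturbation bound. For the `Ã`-orthogonal projectors
`Π = T Tᵀ Ã` and `Π̂ = T̂ T̂ᵀ Ã` and any `v`,
`(Π v − Π̂ v)ᵀ S (Π v − Π̂ v) ≤ 2 M (n^c − ‖T̂ᵀ Ã T‖_F²) vᵀ Ã v`. -/
theorem projector_perturbation_bound {n nc : ℕ}
    (A S : Matrix (Fin n) (Fin n) ℝ)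
    (hA : A.PosSemidef) (hS : S.PosSemidef)
    (M : ℝ) (hM : 0 < M)
    (hdom : ∀ x : Fin n → ℝ, x ⬝ᵥ S.mulVec x ≤ M * (x ⬝ᵥ A.mulVec x))
    (T That : Matrix (Fin n) (Fin nc) ℝ)
    (hT : Tᵀ * A * T = 1) (hThat : Thatᵀ * A * That = 1) :
    ∀ v : Fin n → ℝ,
      ((T * Tᵀ * A).mulVec v - (That * Thatᵀ * A).mulVec v) ⬝ᵥ
          S.mulVec ((T * Tᵀ * A).mulVec v - (That * Thatᵀ * A).mulVec v) ≤
        2 * M * ((nc : ℝ) - frobSq (Thatᵀ * A * T)) * (v ⬝ᵥ A.mulVec v) := by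
  intro v
  have hAsym : Aᵀ = A := by have h := hA.1; simp at h; exact h
  open scoped MatrixOrder in set R := CFC.sqrt A with hRdef
  have hRR : R * R = A := by open scoped MatrixOrder in exact CFC.sqrt_mul_sqrt_self A hA.nonneg
  have hRsym : Rᵀ = R := by
    open scoped MatrixOrder in have h := (CFC.sqrt_nonneg A).posSemidef.1; simp at h; exact h
  set Ghat := Thatᵀ * A * T with hGdef
  set P := T * Tᵀ * A with hPdef
  set Q := That * Thatᵀ * A with hQdef
  have hT' : Tᵀ * (A * T) = 1 := by rw [← Matrix.mul_assoc]; exact hT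
  have hThat' : Thatᵀ * (A * That) = 1 := by rw [← Matrix.mul_assoc]; exact hThat
  have hPsa : Pᵀ * A = A * P := by
    rw [hPdef]; simp only [Matrix.transpose_mul, Matrix.transpose_transpose, hAsym,
      Matrix.mul_assoc]
  have hQsa : Qᵀ * A = A * Q := by
    rw [hQdef]; simp only [Matrix.transpose_mul, Matrix.transpose_transpose, hAsym,
      Matrix.mul_assoc]
  have hPP : P * P = P := by
    calc P * P = T * (Tᵀ * A * T) * (Tᵀ * A) := by simp only [hPdef, Matrix.mul_assoc]
      _ = P := by rw [hT, Matrix.mul_one, hPdef, Matrix.mul_assoc]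
  have hQQ : Q * Q = Q := by
    calc Q * Q = That * (Thatᵀ * A * That) * (Thatᵀ * A) := by
          simp only [hQdef, Matrix.mul_assoc]
      _ = Q := by rw [hThat, Matrix.mul_one, hQdef, Matrix.mul_assoc]
  have hPAP : Pᵀ * (A * P) = A * P := by
    rw [← Matrix.mul_assoc, hPsa, Matrix.mul_assoc, hPP]
  have hQAQ : Qᵀ * (A * Q) = A * Q := by
    rw [← Matrix.mul_assoc, hQsa, Matrix.mul_assoc, hQQ]
  have hKeyQ : (1 - Q)ᵀ * (A * (1 - Q)) = A - A * Q := by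
    rw [Matrix.transpose_sub, Matrix.transpose_one, Matrix.mul_sub A, Matrix.mul_one,
      Matrix.sub_mul, Matrix.one_mul, Matrix.mul_sub Qᵀ, hQAQ, hQsa]
    abel
  have hKeyP : (1 - P)ᵀ * (A * (1 - P)) = A - A * P := by
    rw [Matrix.transpose_sub, Matrix.transpose_one, Matrix.mul_sub A, Matrix.mul_one,
      Matrix.sub_mul, Matrix.one_mul, Matrix.mul_sub Pᵀ, hPAP, hPsa]
    abel
  obtain ⟨C, hCdef⟩ : ∃ C, C = (1 - Q) * T := ⟨_, rfl⟩
  obtain ⟨D, hDdef⟩ : ∃ D, D = (1 - P) * That := ⟨_, rfl⟩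
  obtain ⟨a, hadef⟩ : ∃ a, a = (P * (1 - Q)).mulVec v := ⟨_, rfl⟩
  obtain ⟨b, hbdef⟩ : ∃ b, b = ((1 - P) * Q).mulVec v := ⟨_, rfl⟩
  obtain ⟨w, hwdef⟩ : ∃ w, w = (Thatᵀ * A).mulVec v := ⟨_, rfl⟩
  obtain ⟨x, hxdef⟩ : ∃ x, x = (Cᵀ * A).mulVec v := ⟨_, rfl⟩
  have hGT : Ghatᵀ = Tᵀ * A * That := by
    rw [hGdef]
    simp only [Matrix.transpose_mul, Matrix.transpose_transpose, hAsym, Matrix.mul_assoc]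
  have hPQ : P * (1 - Q) = T * (Cᵀ * A) := by
    calc P * (1 - Q) = T * (Tᵀ * (A * (1 - Q))) := by simp only [hPdef, Matrix.mul_assoc]
      _ = T * (Tᵀ * ((1 - Q)ᵀ * A)) := by
          rw [Matrix.transpose_sub, Matrix.transpose_one, Matrix.sub_mul, Matrix.one_mul,
            Matrix.mul_sub A, Matrix.mul_one, hQsa]
      _ = T * (Cᵀ * A) := by
          rw [hCdef]; simp only [Matrix.transpose_mul, Matrix.mul_assoc]
  have ha_eq : a = T.mulVec x := by
    rw [hadef, hxdef, hPQ, ← Matrix.mulVec_mulVec]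
  have haAa : a ⬝ᵥ A.mulVec a = x ⬝ᵥ x := by
    rw [ha_eq, Matrix.mulVec_mulVec, dot_quad, hT', Matrix.one_mulVec]
  have hx_eq : x = (Cᵀ * R).mulVec (R.mulVec v) := by
    rw [hxdef, Matrix.mulVec_mulVec, ← hRR, ← Matrix.mul_assoc]
  have hRv : (R.mulVec v) ⬝ᵥ (R.mulVec v) = v ⬝ᵥ A.mulVec v := by
    rw [dot_quad, hRsym, hRR]
  have hCAC : Cᵀ * (A * C) = 1 - Ghatᵀ * Ghat := by
    calc Cᵀ * (A * C) = Tᵀ * ((1 - Q)ᵀ * (A * (1 - Q)) * T) := by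
          simp only [hCdef, Matrix.transpose_mul, Matrix.mul_assoc]
      _ = Tᵀ * ((A - A * Q) * T) := by rw [hKeyQ]
      _ = Tᵀ * (A * T) - Tᵀ * (A * (That * (Thatᵀ * (A * T)))) := by
          simp only [hQdef, Matrix.sub_mul, Matrix.mul_sub, Matrix.mul_assoc]
      _ = 1 - Ghatᵀ * Ghat := by
          rw [hT', hGT, hGdef]; simp only [Matrix.mul_assoc]
  have hDAD : Dᵀ * (A * D) = 1 - Ghat * Ghatᵀ := by
    calc Dᵀ * (A * D) = Thatᵀ * ((1 - P)ᵀ * (A * (1 - P)) * That) := by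
          simp only [hDdef, Matrix.transpose_mul, Matrix.mul_assoc]
      _ = Thatᵀ * ((A - A * P) * That) := by rw [hKeyP]
      _ = Thatᵀ * (A * That) - Thatᵀ * (A * (T * (Tᵀ * (A * That)))) := by
          simp only [hPdef, Matrix.sub_mul, Matrix.mul_sub, Matrix.mul_assoc]
      _ = 1 - Ghat * Ghatᵀ := by
          rw [hThat', hGT, hGdef]; simp only [Matrix.mul_assoc]
  have hfrob1 : (Cᵀ * R) * (Cᵀ * R)ᵀ = Cᵀ * (A * C) := by
    rw [Matrix.transpose_mul, Matrix.transpose_transpose, hRsym, ← hRR]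
    simp only [Matrix.mul_assoc]
  have hfrob2 : (R * D)ᵀ * (R * D) = Dᵀ * (A * D) := by
    rw [Matrix.transpose_mul, hRsym, ← hRR]
    simp only [Matrix.mul_assoc]
  have htrace1 : frobSq (Cᵀ * R) = (nc : ℝ) - frobSq Ghat := by
    rw [frobSq_eq_trace, hfrob1, hCAC, Matrix.trace_sub, Matrix.trace_one,
      frobSq_eq_trace' Ghat]
    simp
  have htrace2 : frobSq (R * D) = (nc : ℝ) - frobSq Ghat := by
    rw [frobSq_eq_trace', hfrob2, hDAD, Matrix.trace_sub, Matrix.trace_one,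
      frobSq_eq_trace Ghat]
    simp
  have hee : 0 ≤ (nc : ℝ) - frobSq Ghat := htrace2 ▸ frobSq_nonneg (R * D)
  have ha_bound : a ⬝ᵥ A.mulVec a ≤ ((nc : ℝ) - frobSq Ghat) * (v ⬝ᵥ A.mulVec v) := by
    rw [haAa, hx_eq, ← htrace1, ← hRv]
    exact mulVec_normSq_le _ _
  have hb_eq : b = D.mulVec w := by
    rw [hbdef, hwdef, hDdef, Matrix.mulVec_mulVec]
    congr 1
    rw [hQdef]
    simp only [Matrix.mul_assoc]
  have hbAb : b ⬝ᵥ A.mulVec b = ((R * D).mulVec w) ⬝ᵥ ((R * D).mulVec w) := by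
    rw [hb_eq, Matrix.mulVec_mulVec, dot_quad, dot_quad, hfrob2]
  have hww : w ⬝ᵥ w ≤ v ⬝ᵥ A.mulVec v := by
    have h1 : w ⬝ᵥ w = v ⬝ᵥ ((A * Q).mulVec v) := by
      rw [hwdef, dot_quad, Matrix.transpose_mul, Matrix.transpose_transpose, hAsym, hQdef]
      simp only [Matrix.mul_assoc]
    have h2 : 0 ≤ ((1 - Q).mulVec v) ⬝ᵥ A.mulVec ((1 - Q).mulVec v) := by
      simpa using hA.dotProduct_mulVec_nonneg ((1 - Q).mulVec v)
    have h3 : ((1 - Q).mulVec v) ⬝ᵥ A.mulVec ((1 - Q).mulVec v) =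
        v ⬝ᵥ A.mulVec v - v ⬝ᵥ ((A * Q).mulVec v) := by
      rw [Matrix.mulVec_mulVec, dot_quad, hKeyQ, Matrix.sub_mulVec, dotProduct_sub]
    linarith
  have hb_bound : b ⬝ᵥ A.mulVec b ≤ ((nc : ℝ) - frobSq Ghat) * (v ⬝ᵥ A.mulVec v) := by
    rw [hbAb]
    calc ((R * D).mulVec w) ⬝ᵥ ((R * D).mulVec w) ≤ frobSq (R * D) * (w ⬝ᵥ w) :=
          mulVec_normSq_le _ _
      _ ≤ ((nc : ℝ) - frobSq Ghat) * (v ⬝ᵥ A.mulVec v) := by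
          rw [htrace2]; exact mul_le_mul_of_nonneg_left hww hee
  have hPAPz : Pᵀ * (A * (1 - P)) = 0 := by
    rw [Matrix.mul_sub A, Matrix.mul_one, Matrix.mul_sub Pᵀ, hPAP, hPsa, sub_self]
  have h1PAPz : (1 - P)ᵀ * (A * P) = 0 := by
    rw [Matrix.transpose_sub, Matrix.transpose_one, Matrix.sub_mul, Matrix.one_mul, hPAP,
      sub_self]
  have hcross1 : a ⬝ᵥ A.mulVec b = 0 := by
    have hz : (P * (1 - Q))ᵀ * (A * ((1 - P) * Q)) = 0 := by
      calc (P * (1 - Q))ᵀ * (A * ((1 - P) * Q))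
          = (1 - Q)ᵀ * ((Pᵀ * (A * (1 - P))) * Q) := by
            simp only [Matrix.transpose_mul, Matrix.mul_assoc]
        _ = 0 := by rw [hPAPz, Matrix.zero_mul, Matrix.mul_zero]
    rw [hadef, hbdef, Matrix.mulVec_mulVec, dot_quad, hz, Matrix.zero_mulVec,
      dotProduct_zero]
  have hcross2 : b ⬝ᵥ A.mulVec a = 0 := by
    have hz : ((1 - P) * Q)ᵀ * (A * (P * (1 - Q))) = 0 := by
      calc ((1 - P) * Q)ᵀ * (A * (P * (1 - Q)))
          = Qᵀ * (((1 - P)ᵀ * (A * P)) * (1 - Q)) := by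
            simp only [Matrix.transpose_mul, Matrix.mul_assoc]
        _ = 0 := by rw [h1PAPz, Matrix.zero_mul, Matrix.mul_zero]
    rw [hadef, hbdef, Matrix.mulVec_mulVec, dot_quad, hz, Matrix.zero_mulVec,
      dotProduct_zero]
  have hdecomp : P.mulVec v - Q.mulVec v = a - b := by
    rw [hadef, hbdef, ← Matrix.sub_mulVec, ← Matrix.sub_mulVec]
    congr 1
    noncomm_ring
  rw [hdecomp]
  have hsplit : (a - b) ⬝ᵥ A.mulVec (a - b) = a ⬝ᵥ A.mulVec a + b ⬝ᵥ A.mulVec b := by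
    rw [Matrix.mulVec_sub, dotProduct_sub, sub_dotProduct, sub_dotProduct, hcross1, hcross2]
    ring
  calc (a - b) ⬝ᵥ S.mulVec (a - b) ≤ M * ((a - b) ⬝ᵥ A.mulVec (a - b)) := hdom _
    _ = M * (a ⬝ᵥ A.mulVec a + b ⬝ᵥ A.mulVec b) := by rw [hsplit]
    _ ≤ M * (((nc : ℝ) - frobSq Ghat) * (v ⬝ᵥ A.mulVec v)
          + ((nc : ℝ) - frobSq Ghat) * (v ⬝ᵥ A.mulVec v)) := by
        apply mul_le_mul_of_nonneg_left _ hM.le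
        linarith
    _ = 2 * M * ((nc : ℝ) - frobSq Ghat) * (v ⬝ᵥ A.mulVec v) := by ring
end
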